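/- The set of X ∈ ℚ for which there exist p, q ∈ ℚ with (p² − 5q²)² = X⁴ − 78X² + 1296 is infinite; that is, there are infinitely many rational points on the elliptic curve Y² = X⁴ − 78X² + 1296 = (X² − 24)(X² − 54) whose Y-coordinate is represented by the quadratic form p² − 5q². -/

import Mathlib

namespace Stmt7

/-! Valuation helpers -/

lemma v2_two : padicValRat 2 (2:ℚ) = 1 := by
  exact_mod_cast padicValRat.self (p := 2) one_lt_two

lemma v2_odd (a : ℕ) (ha : a % 2 = 1) : padicValRat 2 (a:ℚ) = 0 := by
  rw [padicValRat.of_nat]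
  exact_mod_cast padicValNat.eq_zero_of_not_dvd (by omega)

lemma v2_pow (k : ℕ) : padicValRat 2 ((2:ℚ)^k) = k := by
  rw [padicValRat.pow (2:ℚ), v2_two, mul_one]

lemma v2_mul_pow (a k : ℕ) (ha : a % 2 = 1) : padicValRat 2 ((a:ℚ) * 2^k) = k := by
  have ha0 : (a:ℚ) ≠ 0 := Nat.cast_ne_zero.mpr (by omega)
  rw [padicValRat.mul ha0 (by positivity), v2_odd a ha, v2_pow, zero_add]

lemma v36 : padicValRat 2 (36:ℚ) = 2 := by
  have h : (36:ℚ) = ((9:ℕ):ℚ) * 2^2 := by norm_num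
  rw [h, v2_mul_pow 9 2 rfl]; norm_num

lemma v24 : padicValRat 2 (24:ℚ) = 3 := by
  have h : (24:ℚ) = ((3:ℕ):ℚ) * 2^3 := by norm_num
  rw [h, v2_mul_pow 3 3 rfl]; norm_num

lemma v25 : padicValRat 2 (25:ℚ) = 0 := by
  have h : (25:ℚ) = ((25:ℕ):ℚ) * 2^0 := by norm_num
  rw [h, v2_mul_pow 25 0 rfl]; norm_num

lemma v60 : padicValRat 2 (60:ℚ) = 2 := by
  have h : (60:ℚ) = ((15:ℕ):ℚ) * 2^2 := by norm_num
  rw [h, v2_mul_pow 15 2 rfl]; norm_num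

lemma v120 : padicValRat 2 (120:ℚ) = 3 := by
  have h : (120:ℚ) = ((15:ℕ):ℚ) * 2^3 := by norm_num
  rw [h, v2_mul_pow 15 3 rfl]; norm_num

lemma v588 : padicValRat 2 (588:ℚ) = 2 := by
  have h : (588:ℚ) = ((147:ℕ):ℚ) * 2^2 := by norm_num
  rw [h, v2_mul_pow 147 2 rfl]; norm_num

lemma add_val_left {a b : ℚ} (ha : a ≠ 0) (hb : b ≠ 0)
    (h : padicValRat 2 a < padicValRat 2 b) :
    a + b ≠ 0 ∧ padicValRat 2 (a + b) = padicValRat 2 a := by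
  have hne : a + b ≠ 0 := by
    intro h0
    have hab : a = -b := eq_neg_of_add_eq_zero_left h0
    rw [hab, padicValRat.neg] at h
    exact lt_irrefl _ h
  exact ⟨hne, padicValRat.add_eq_of_lt hne ha hb h⟩

lemma sub_val_left {a b : ℚ} (ha : a ≠ 0) (hb : b ≠ 0)
    (h : padicValRat 2 a < padicValRat 2 b) :
    a - b ≠ 0 ∧ padicValRat 2 (a - b) = padicValRat 2 a := by
  have := add_val_left ha (neg_ne_zero.mpr hb) (by rwa [padicValRat.neg])
  simpa [sub_eq_add_neg] using this

lemma sub_val_right {a b : ℚ} (ha : a ≠ 0) (hb : b ≠ 0)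
    (h : padicValRat 2 b < padicValRat 2 a) :
    a - b ≠ 0 ∧ padicValRat 2 (a - b) = padicValRat 2 b := by
  have := add_val_left (neg_ne_zero.mpr hb) ha (by rwa [padicValRat.neg])
  simpa [neg_add_eq_sub] using this

/-! Curve lemmas -/

lemma D_val (m : ℕ) (X : ℚ) (hX0 : X ≠ 0)
    (hvX : padicValRat 2 X = -2*(m:ℤ)-2) :
    (X^2 + 588*X + 36) ≠ 0 ∧ padicValRat 2 (X^2 + 588*X + 36) = -4*(m:ℤ)-4 := by
  have hm : (0:ℤ) ≤ (m:ℤ) := Int.natCast_nonneg m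
  have vX2 : padicValRat 2 (X^2) = -4*(m:ℤ)-4 := by
    rw [padicValRat.pow X, hvX]; ring
  have h588X0 : 588*X ≠ 0 := mul_ne_zero (by norm_num) hX0
  have v588X : padicValRat 2 (588*X) = -2*(m:ℤ) := by
    rw [padicValRat.mul (by norm_num) hX0, v588, hvX]; ring
  have h1 := add_val_left h588X0 (show (36:ℚ) ≠ 0 by norm_num)
    (by rw [v588X, v36]; omega)
  have h2 := add_val_left (pow_ne_zero 2 hX0) h1.1
    (by rw [vX2, h1.2]; omega)
  constructor
  · rw [add_assoc]; exact h2.1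
  · rw [add_assoc, h2.2, vX2]

lemma curve_val (m : ℕ) (X y : ℚ) (hy : y^2 = X^3 + 588*X^2 + 36*X) (hX0 : X ≠ 0)
    (hvX : padicValRat 2 X = -2*(m:ℤ)-2) :
    y ≠ 0 ∧ padicValRat 2 y = -3*(m:ℤ)-3 := by
  obtain ⟨hD0, hDv⟩ := D_val m X hX0 hvX
  have hyy : y^2 = X*(X^2 + 588*X + 36) := by linear_combination hy
  have hy0 : y ≠ 0 := by
    intro h
    rw [h] at hyy
    exact (mul_ne_zero hX0 hD0) (by linarith [hyy])
  have h2 : (2:ℤ) * padicValRat 2 y = -6*(m:ℤ)-6 := by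
    have := padicValRat.pow (p := 2) y (k := 2)
    rw [hyy, padicValRat.mul hX0 hD0, hvX, hDv] at this
    omega
  exact ⟨hy0, by omega⟩

/-! The quartic-level solution identity -/

lemma quartic (μ w : ℚ) (hw : w^2 = 6*(μ^2-24)*(μ^2-25)) (hw0 : w ≠ 0)
    (h24 : μ^2 - 24 ≠ 0) (h25 : μ^2 - 25 ≠ 0) :
    ∃ p q : ℚ, (p^2 - 5*q^2)^2
      = (μ*w/(2*(μ^2-25)))^4 - 78*(μ*w/(2*(μ^2-25)))^2 + 1296 := by
  refine ⟨(15*(μ+2)*(μ^2-24) + 3*(μ+10)*w)/(2*w),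
          (-3)*((μ+10)*(μ^2-24) + (μ+2)*w)/(2*w), ?_⟩
  have hN : ((15*(μ+2)*(μ^2-24) + 3*(μ+10)*w)/(2*w))^2
      - 5*((-3)*((μ+10)*(μ^2-24) + (μ+2)*w)/(2*w))^2
      = 3*(μ^2-20)*(30-μ^2)/(2*(μ^2-25)) := by
    have e1 : ((15*(μ+2)*(μ^2-24) + 3*(μ+10)*w)/(2*w))^2
        - 5*((-3)*((μ+10)*(μ^2-24) + (μ+2)*w)/(2*w))^2
        = (180*(μ^2-20)*(μ^2-24)^2 - 36*(μ^2-20)*w^2)/(4*w^2) := by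
      field_simp
      ring
    rw [e1, hw]
    field_simp
    ring
  have hx2 : (μ*w/(2*(μ^2-25)))^2 = 3*μ^2*(μ^2-24)/(2*(μ^2-25)) := by
    have e2 : (μ*w/(2*(μ^2-25)))^2 = μ^2*w^2/(4*(μ^2-25)^2) := by
      field_simp
      ring
    rw [e2, hw]
    field_simp
    ring
  have hx4 : (μ*w/(2*(μ^2-25)))^4 = ((μ*w/(2*(μ^2-25)))^2)^2 := by ring
  rw [hN, hx4, hx2]
  field_simp
  ring

/-! Building a solution from a point on the cubic -/

lemma build (n : ℕ) (X y : ℚ) (hy : y^2 = X^3 + 588*X^2 + 36*X)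
    (hvX : padicValRat 2 X = -2*(n:ℤ)-2) (hvy : padicValRat 2 y = -3*(n:ℤ)-3) :
    ∃ x p q : ℚ, (p^2 - 5*q^2)^2 = x^4 - 78*x^2 + 1296 ∧ padicValRat 2 x = (n:ℤ)+5 := by
  have hn : (0:ℤ) ≤ (n:ℤ) := Int.natCast_nonneg n
  have hX0 : X ≠ 0 := by
    intro h; rw [h, padicValRat.zero] at hvX; omega
  have hy0 : y ≠ 0 := by
    intro h; rw [h, padicValRat.zero] at hvy; omega
  obtain ⟨hD0, hDv⟩ := D_val n X hX0 hvX
  have vX2 : padicValRat 2 (X^2) = -4*(n:ℤ)-4 := by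
    rw [padicValRat.pow X, hvX]; ring
  have hX36 := sub_val_left (pow_ne_zero 2 hX0) (show (36:ℚ) ≠ 0 by norm_num)
    (by rw [vX2, v36]; omega)
  -- μ
  have hμ0 : 120*X/y ≠ 0 := div_ne_zero (mul_ne_zero (by norm_num) hX0) hy0
  have hvμ : padicValRat 2 (120*X/y) = (n:ℤ)+4 := by
    rw [padicValRat.div (mul_ne_zero (by norm_num) hX0) hy0,
      padicValRat.mul (show (120:ℚ) ≠ 0 by norm_num) hX0, v120, hvX, hvy]
    ring
  have hvμ2 : padicValRat 2 ((120*X/y)^2) = 2*(n:ℤ)+8 := by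
    rw [padicValRat.pow (120*X/y), hvμ]; ring
  have h25 := sub_val_right (pow_ne_zero 2 hμ0) (show (25:ℚ) ≠ 0 by norm_num)
    (by rw [hvμ2, v25]; omega)
  have h24 := sub_val_right (pow_ne_zero 2 hμ0) (show (24:ℚ) ≠ 0 by norm_num)
    (by rw [hvμ2, v24]; omega)
  -- w
  have hw0 : 60*(X^2-36)/(X^2+588*X+36) ≠ 0 :=
    div_ne_zero (mul_ne_zero (by norm_num) hX36.1) hD0
  have hvw : padicValRat 2 (60*(X^2-36)/(X^2+588*X+36)) = 2 := by
    rw [padicValRat.div (mul_ne_zero (by norm_num) hX36.1) hD0,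
      padicValRat.mul (show (60:ℚ) ≠ 0 by norm_num) hX36.1, v60, hX36.2, vX2, hDv]
    omega
  have hw : (60*(X^2-36)/(X^2+588*X+36))^2
      = 6*((120*X/y)^2-24)*((120*X/y)^2-25) := by
    have hD0' : X * (X + 588) + 36 ≠ 0 := by convert hD0 using 1; ring
    field_simp
    rw [show y^4 = (y^2)^2 by ring, hy]
    ring
  obtain ⟨p, q, hpq⟩ := quartic (120*X/y) (60*(X^2-36)/(X^2+588*X+36)) hw hw0 h24.1 h25.1
  refine ⟨_, p, q, hpq, ?_⟩
  rw [padicValRat.div (mul_ne_zero hμ0 hw0) (mul_ne_zero two_ne_zero h25.1),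
    padicValRat.mul hμ0 hw0, padicValRat.mul two_ne_zero h25.1,
    hvμ, hvw, v2_two, h25.2, v25]
  omega

/-! The sequence of points (doubling on the cubic) -/

def W : ℕ → ℚ × ℚ
  | 0 => (49/100, -12607/1000)
  | n+1 =>
      ((((W n).1^2-36)/(2*(W n).2))^2,
       (3*(W n).1^2+1176*(W n).1+36)/(2*(W n).2)
         * ((W n).1 - (((W n).1^2-36)/(2*(W n).2))^2) - (W n).2)

lemma step_inv (n : ℕ) (X y : ℚ) (hy : y^2 = X^3 + 588*X^2 + 36*X)
    (hvX : padicValRat 2 X = -2*(n:ℤ)-2) (hvy : padicValRat 2 y = -3*(n:ℤ)-3) :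
    ((3*X^2+1176*X+36)/(2*y) * (X - ((X^2-36)/(2*y))^2) - y)^2
      = (((X^2-36)/(2*y))^2)^3 + 588*(((X^2-36)/(2*y))^2)^2 + 36*((X^2-36)/(2*y))^2
    ∧ padicValRat 2 (((X^2-36)/(2*y))^2) = -2*((n:ℤ)+1)-2 := by
  have hn : (0:ℤ) ≤ (n:ℤ) := Int.natCast_nonneg n
  have hX0 : X ≠ 0 := by
    intro h; rw [h, padicValRat.zero] at hvX; omega
  have hy0 : y ≠ 0 := by
    intro h; rw [h, padicValRat.zero] at hvy; omega
  have vX2 : padicValRat 2 (X^2) = -4*(n:ℤ)-4 := by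
    rw [padicValRat.pow X, hvX]; ring
  have hX36 := sub_val_left (pow_ne_zero 2 hX0) (show (36:ℚ) ≠ 0 by norm_num)
    (by rw [vX2, v36]; omega)
  have h2y0 : 2*y ≠ 0 := mul_ne_zero two_ne_zero hy0
  have hs0 : (X^2-36)/(2*y) ≠ 0 := div_ne_zero hX36.1 h2y0
  have hvs : padicValRat 2 ((X^2-36)/(2*y)) = -(n:ℤ)-2 := by
    rw [padicValRat.div hX36.1 h2y0, hX36.2, vX2,
      padicValRat.mul two_ne_zero hy0, v2_two, hvy]
    omega
  have hvX' : padicValRat 2 (((X^2-36)/(2*y))^2) = -2*((n:ℤ)+1)-2 := by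
    rw [padicValRat.pow ((X^2-36)/(2*y)), hvs]; ring
  refine ⟨?_, hvX'⟩
  field_simp
  rw [show y^4 = (y^2)^2 by ring, hy]
  ring

lemma inv : ∀ n : ℕ, ((W n).2^2 = (W n).1^3 + 588*(W n).1^2 + 36*(W n).1)
    ∧ padicValRat 2 (W n).1 = -2*(n:ℤ)-2
  | 0 => by
      constructor
      · show ((-12607/1000 : ℚ))^2 = (49/100:ℚ)^3 + 588*(49/100:ℚ)^2 + 36*(49/100:ℚ)
        norm_num
      · show padicValRat 2 (49/100 : ℚ) = -2*((0:ℕ):ℤ)-2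
        have h : (49/100:ℚ) = ((49:ℕ):ℚ) / (((25:ℕ):ℚ) * 2^2) := by norm_num
        rw [h, padicValRat.div (by norm_num) (by positivity), v2_odd 49 rfl,
          v2_mul_pow 25 2 rfl]
        norm_num
  | n+1 => by
      obtain ⟨hy, hvX⟩ := inv n
      have hX0 : (W n).1 ≠ 0 := by
        intro h; rw [h, padicValRat.zero] at hvX
        have := Int.natCast_nonneg n; omega
      obtain ⟨_, hvy⟩ := curve_val n _ _ hy hX0 hvX
      obtain ⟨hC, hvX'⟩ := step_inv n (W n).1 (W n).2 hy hvX hvy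
      constructor
      · show ((3*(W n).1^2+1176*(W n).1+36)/(2*(W n).2)
            * ((W n).1 - (((W n).1^2-36)/(2*(W n).2))^2) - (W n).2)^2
          = ((((W n).1^2-36)/(2*(W n).2))^2)^3
            + 588*((((W n).1^2-36)/(2*(W n).2))^2)^2
            + 36*(((W n).1^2-36)/(2*(W n).2))^2
        exact hC
      · show padicValRat 2 ((((W n).1^2-36)/(2*(W n).2))^2) = -2*((n+1:ℕ):ℤ)-2
        rw [hvX']; push_cast; ring

end Stmt7

theorem stmt_7 :
    {x : ℚ | ∃ p q : ℚ, (p ^ 2 - 5 * q ^ 2) ^ 2 = x ^ 4 - 78 * x ^ 2 + 1296}.Infinite := by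
  have main : ∀ n : ℕ, ∃ x : ℚ,
      (∃ p q : ℚ, (p^2 - 5*q^2)^2 = x^4 - 78*x^2 + 1296) ∧ padicValRat 2 x = (n:ℤ)+5 := by
    intro n
    obtain ⟨hy, hvX⟩ := Stmt7.inv n
    have hX0 : (Stmt7.W n).1 ≠ 0 := by
      intro h; rw [h, padicValRat.zero] at hvX
      have := Int.natCast_nonneg n; omega
    obtain ⟨hy0, hvy⟩ := Stmt7.curve_val n _ _ hy hX0 hvX
    obtain ⟨x, p, q, hpq, hvx⟩ := Stmt7.build n _ _ hy hvX hvy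
    exact ⟨x, ⟨p, q, hpq⟩, hvx⟩
  have hinj : Function.Injective (fun n : ℕ => (main n).choose) := by
    intro a b hab
    have ha := (main a).choose_spec.2
    have hb := (main b).choose_spec.2
    dsimp only at hab
    rw [hab, hb] at ha
    omega
  exact Set.infinite_of_injective_forall_mem hinj (fun a => (main a).choose_spec.1)
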